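/- Let C be a Q-linear idempotent-complete symmetric monoidal category and X an object of C such that the third exterior power ∧³X = 0. Then for every partition λ = (n₁, …, n_r) with r ≥ 3 parts, the Schur functor S_λ applied to X vanishes: S_λ(X) = 0. -/

import Mathlib

open Finset

/-- The (unnormalized) antisymmetrizer over the set `S` of tensor factors:
`∑_{σ ∈ Perm(S)} sgn(σ) · σ` in the rational group algebra of `Σ_n`. -/
noncomputable def altSum (n : ℕ) (S : Finset (Fin n)) :
    MonoidAlgebra ℚ (Equiv.Perm (Fin n)) :=
  ∑ σ ∈ Finset.univ.filter (fun σ : Equiv.Perm (Fin n) => ∀ i ∉ S, σ i = i),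
    ((Equiv.Perm.sign σ : ℤ) : ℚ) • MonoidAlgebra.single σ 1

/-- The row symmetrizer `a_λ = ∑_{σ ∈ row stabilizer} σ` of a tableau whose cell
coordinates (row, column) are given by `c`. -/
noncomputable def rowSym (n : ℕ) (c : Fin n → ℕ × ℕ) :
    MonoidAlgebra ℚ (Equiv.Perm (Fin n)) :=
  ∑ σ ∈ Finset.univ.filter (fun σ : Equiv.Perm (Fin n) => ∀ x, (c (σ x)).1 = (c x).1),
    MonoidAlgebra.single σ (1 : ℚ)

/-- The column antisymmetrizer `b_λ = ∑_{σ ∈ column stabilizer} sgn(σ) · σ`. -/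
noncomputable def colAlt (n : ℕ) (c : Fin n → ℕ × ℕ) :
    MonoidAlgebra ℚ (Equiv.Perm (Fin n)) :=
  ∑ σ ∈ Finset.univ.filter (fun σ : Equiv.Perm (Fin n) => ∀ x, (c (σ x)).2 = (c x).2),
    ((Equiv.Perm.sign σ : ℤ) : ℚ) • MonoidAlgebra.single σ 1


lemma mem_of_supported {n : ℕ} {T : Finset (Fin n)} {h : Equiv.Perm (Fin n)}
    (hh : ∀ i ∉ T, h i = i) {x : Fin n} (hx : x ∈ T) : h x ∈ T := by
  by_contra hmem
  have h1 : h (h x) = h x := hh _ hmem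
  have h2 : h x = x := h.injective h1
  exact hmem (h2.symm ▸ hx)

lemma supported_col {n : ℕ} {c : Fin n → ℕ × ℕ} {T : Finset (Fin n)} {j : ℕ}
    (hT : ∀ x ∈ T, (c x).2 = j) {h : Equiv.Perm (Fin n)}
    (hh : ∀ i ∉ T, h i = i) : ∀ x, (c (h x)).2 = (c x).2 := by
  intro x
  by_cases hx : x ∈ T
  · rw [hT _ (mem_of_supported hh hx), hT _ hx]
  · rw [hh _ hx]

lemma colAlt_mul_altSum (n : ℕ) (c : Fin n → ℕ × ℕ) (T : Finset (Fin n)) (j : ℕ)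
    (hT : ∀ x ∈ T, (c x).2 = j) :
    colAlt n c * altSum n T =
      (((Finset.univ.filter (fun σ : Equiv.Perm (Fin n) => ∀ i ∉ T, σ i = i)).card : ℚ)) •
        colAlt n c := by
  unfold colAlt altSum
  rw [Finset.sum_mul_sum, Finset.sum_comm]
  have : ∀ h ∈ Finset.univ.filter (fun σ : Equiv.Perm (Fin n) => ∀ i ∉ T, σ i = i),
      (∑ σ ∈ Finset.univ.filter (fun σ : Equiv.Perm (Fin n) => ∀ x, (c (σ x)).2 = (c x).2),
        (((Equiv.Perm.sign σ : ℤ) : ℚ) • MonoidAlgebra.single σ 1) *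
          (((Equiv.Perm.sign h : ℤ) : ℚ) • MonoidAlgebra.single h 1)) = colAlt n c := by
    intro h hh
    rw [Finset.mem_filter] at hh
    have hcol : ∀ x, (c (h x)).2 = (c x).2 := supported_col hT hh.2
    have hcolinv : ∀ x, (c (h⁻¹ x)).2 = (c x).2 := by
      intro x
      conv_rhs => rw [← (by simp : h (h⁻¹ x) = x)]
      rw [hcol]
    unfold colAlt
    refine Finset.sum_nbij' (fun σ => σ * h) (fun τ => τ * h⁻¹) ?_ ?_ ?_ ?_ ?_
    · intro σ hσ
      rw [Finset.mem_filter] at hσ ⊢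
      refine ⟨Finset.mem_univ _, fun x => ?_⟩
      simp only [Equiv.Perm.mul_apply]
      rw [hσ.2, hcol]
    · intro τ hτ
      rw [Finset.mem_filter] at hτ ⊢
      refine ⟨Finset.mem_univ _, fun x => ?_⟩
      simp only [Equiv.Perm.mul_apply]
      rw [hτ.2, hcolinv]
    · intro σ _; simp [mul_assoc]
    · intro τ _; simp [mul_assoc]
    · intro σ hσ
      rw [smul_mul_smul_comm, MonoidAlgebra.single_mul_single, one_mul, map_mul]
      push_cast
      ring_nf
  rw [Finset.sum_congr rfl this, Finset.sum_const, Nat.cast_smul_eq_nsmul]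
  rfl

/-- Let `C` be a `ℚ`-linear idempotent-complete symmetric monoidal category
and `X` an object with `∧³X = 0`.  Encode the action of the symmetric group `Σ_n` on
`X^{⊗n}` by an algebra homomorphism `φ : ℚ[Σ_n] → A := End(X^{⊗n})`.  In an
idempotent-complete additive category, the image of the (quasi-idempotent) Young
symmetrizer `c_λ = a_λ · b_λ` vanishes iff `φ(c_λ) = 0`, and `∧³X = 0` says exactly that
the antisymmetrizer of any 3-element set of tensor factors acts by zero.  Then for every
partition `λ = (n₁, …, n_r)` of `n` with `r ≥ 3` rows — encoded by an injective filling
`c : Fin n → ℕ × ℕ` (cell coordinates `(row, column)`) whose image is a downward-closed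
Young diagram reaching row index `2` — the Schur functor `S_λ(X)` vanishes:
`φ(a_λ · b_λ) = 0`. -/
theorem stmt_2 (n : ℕ) (A : Type) [Ring A] [Algebra ℚ A]
    (φ : MonoidAlgebra ℚ (Equiv.Perm (Fin n)) →ₐ[ℚ] A)
    (c : Fin n → ℕ × ℕ) (hc : Function.Injective c)
    (hYoung : ∀ p : ℕ × ℕ, p ∈ Set.range c →
      ∀ q : ℕ × ℕ, q.1 ≤ p.1 → q.2 ≤ p.2 → q ∈ Set.range c)
    (hrows : ∃ x : Fin n, 2 ≤ (c x).1)
    (h3 : ∀ S : Finset (Fin n), S.card = 3 → φ (altSum n S) = 0) :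
    φ (rowSym n c * colAlt n c) = 0 := by
  obtain ⟨x, hx⟩ := hrows
  set j := (c x).2 with hj
  have hcell : ∀ i : ℕ, i ≤ 2 → ∃ y : Fin n, c y = (i, j) := by
    intro i hi
    exact hYoung (c x) ⟨x, rfl⟩ (i, j) (le_trans hi hx) le_rfl
  obtain ⟨y0, hy0⟩ := hcell 0 (by norm_num)
  obtain ⟨y1, hy1⟩ := hcell 1 (by norm_num)
  obtain ⟨y2, hy2⟩ := hcell 2 (by norm_num)
  have hne01 : y0 ≠ y1 := fun h => by simp [h, hy1] at hy0
  have hne02 : y0 ≠ y2 := fun h => by simp [h, hy2] at hy0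
  have hne12 : y1 ≠ y2 := fun h => by simp [h, hy2] at hy1
  set T : Finset (Fin n) := {y0, y1, y2} with hTdef
  have hcard : T.card = 3 := by
    rw [hTdef]
    rw [Finset.card_insert_of_notMem (by simp [hne01, hne02]),
      Finset.card_insert_of_notMem (by simp [hne12]), Finset.card_singleton]
  have hcol : ∀ z ∈ T, (c z).2 = j := by
    intro z hz
    rw [hTdef] at hz
    simp only [Finset.mem_insert, Finset.mem_singleton] at hz
    rcases hz with rfl | rfl | rfl <;> simp [hy0, hy1, hy2]
  have key := colAlt_mul_altSum n c T j hcol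
  set N : ℚ := ((Finset.univ.filter (fun σ : Equiv.Perm (Fin n) => ∀ i ∉ T, σ i = i)).card : ℚ)
    with hN
  have hNpos : N ≠ 0 := by
    rw [hN]
    have : (1 : Equiv.Perm (Fin n)) ∈
        Finset.univ.filter (fun σ : Equiv.Perm (Fin n) => ∀ i ∉ T, σ i = i) := by
      simp
    have := Finset.card_pos.mpr ⟨_, this⟩
    positivity
  have h0 : N • φ (rowSym n c * colAlt n c) = 0 := by
    have : rowSym n c * colAlt n c * altSum n T = N • (rowSym n c * colAlt n c) := by
      rw [mul_assoc, key, mul_smul_comm]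
    calc N • φ (rowSym n c * colAlt n c) = φ (N • (rowSym n c * colAlt n c)) := by
          rw [map_smul]
      _ = φ (rowSym n c * colAlt n c * altSum n T) := by rw [this]
      _ = φ (rowSym n c * colAlt n c) * φ (altSum n T) := by rw [map_mul]
      _ = 0 := by rw [h3 T hcard, mul_zero]
  have := congrArg (fun a => N⁻¹ • a) h0
  simpa [smul_smul, inv_mul_cancel₀ hNpos] using this
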